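/- Let M = [1, +∞) with the usual metric, and for x ∈ M set T(x) = [x + 1/(x(x+1)), x + 1] and φ(x) = 1/x. Then each T(x) is a nonempty compact subset of M, for every x ∈ M one has dist(x, T(x)) ≤ φ(x) − inf φ(T(x)), and yet T has no fixed point in M. (Hence Penot's problem has a negative answer even when T takes nonempty compact values.) -/

import Mathlib

/-- Negative answer to Penot's problem with compact values: on `M = [1, ∞)`,
the map `T x = [x + 1/(x(x+1)), x + 1]` has nonempty compact values and, with
`φ x = 1/x`, satisfies `dist(x, T x) ≤ φ x - inf φ(T x)` for all `x ∈ M`,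
yet `T` has no fixed point. -/
theorem penot_problem_negative_answer_compact
    (φ : {x : ℝ // 1 ≤ x} → ℝ) (hφdef : ∀ x, φ x = 1 / (x : ℝ))
    (T : {x : ℝ // 1 ≤ x} → Set {x : ℝ // 1 ≤ x})
    (hTdef : ∀ x, T x =
      {y : {x : ℝ // 1 ≤ x} | (x : ℝ) + 1 / ((x : ℝ) * ((x : ℝ) + 1)) ≤ (y : ℝ) ∧ (y : ℝ) ≤ (x : ℝ) + 1}) :
    (∀ x, (T x).Nonempty ∧ IsCompact (T x)) ∧
    (∀ x, Metric.infDist x (T x) ≤ φ x - sInf (φ '' T x)) ∧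
    ¬∃ x, x ∈ T x := by
  refine ⟨?_, ?_, ?_⟩
  · rintro ⟨x, hx⟩
    have hx0 : (0:ℝ) < x := lt_of_lt_of_le one_pos hx
    have hpos : 0 < 1 / (x * (x + 1)) := by positivity
    have hle : x + 1 / (x * (x + 1)) ≤ x + 1 := by
      have : 1 / (x * (x + 1)) ≤ 1 := by
        rw [div_le_one (by positivity)]; nlinarith
      linarith
    constructor
    · refine ⟨⟨x + 1, by linarith⟩, ?_⟩
      rw [hTdef]
      exact ⟨hle, le_refl _⟩
    · rw [hTdef]
      have heq : {y : {x : ℝ // 1 ≤ x} |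
          x + 1 / (x * (x + 1)) ≤ (y : ℝ) ∧ (y : ℝ) ≤ x + 1}
          = Subtype.val ⁻¹' Set.Icc (x + 1 / (x * (x + 1))) (x + 1) := rfl
      rw [heq]
      exact (Topology.IsClosedEmbedding.subtypeVal isClosed_Ici).isCompact_preimage
        isCompact_Icc
  · rintro ⟨x, hx⟩
    have hx0 : (0:ℝ) < x := lt_of_lt_of_le one_pos hx
    have hpos : 0 < 1 / (x * (x + 1)) := by positivity
    set a : {x : ℝ // 1 ≤ x} := ⟨x + 1 / (x * (x + 1)), by linarith⟩ with ha'
    set b : {x : ℝ // 1 ≤ x} := ⟨x + 1, by linarith⟩ with hb'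
    have ha : a ∈ T ⟨x, hx⟩ := by
      rw [hTdef]
      refine ⟨le_refl _, ?_⟩
      show x + 1 / (x * (x + 1)) ≤ x + 1
      have : 1 / (x * (x + 1)) ≤ 1 := by
        rw [div_le_one (by positivity)]; nlinarith
      linarith
    have hb : b ∈ T ⟨x, hx⟩ := by
      rw [hTdef]
      refine ⟨?_, le_refl _⟩
      show x + 1 / (x * (x + 1)) ≤ x + 1
      have : 1 / (x * (x + 1)) ≤ 1 := by
        rw [div_le_one (by positivity)]; nlinarith
      linarith
    have h1 : Metric.infDist (⟨x, hx⟩ : {x : ℝ // 1 ≤ x}) (T ⟨x, hx⟩)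
        ≤ dist (⟨x, hx⟩ : {x : ℝ // 1 ≤ x}) a :=
      Metric.infDist_le_dist_of_mem ha
    have hd : dist (⟨x, hx⟩ : {x : ℝ // 1 ≤ x}) a = 1 / (x * (x + 1)) := by
      rw [Subtype.dist_eq, Real.dist_eq]
      show |x - (x + 1 / (x * (x + 1)))| = _
      rw [abs_of_nonpos (by linarith)]
      ring
    have hbdd : BddBelow (φ '' T ⟨x, hx⟩) := by
      refine ⟨0, ?_⟩
      rintro z ⟨⟨y, hy⟩, _, rfl⟩
      rw [hφdef]
      positivity
    have h2 : sInf (φ '' T ⟨x, hx⟩) ≤ φ b := csInf_le hbdd ⟨b, hb, rfl⟩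
    have hφb : φ b = 1 / (x + 1) := by rw [hφdef]
    have hφx : φ (⟨x, hx⟩ : {x : ℝ // 1 ≤ x}) = 1 / x := by rw [hφdef]
    have hkey : 1 / (x * (x + 1)) = 1 / x - 1 / (x + 1) := by
      field_simp
      ring
    rw [hφx]
    rw [hd] at h1
    rw [hφb] at h2
    linarith
  · rintro ⟨⟨x, hx⟩, hmem⟩
    rw [hTdef] at hmem
    have hx0 : (0:ℝ) < x := lt_of_lt_of_le one_pos hx
    have hpos : 0 < 1 / (x * (x + 1)) := by positivity
    have h1 : x + 1 / (x * (x + 1)) ≤ x := hmem.1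
    linarith
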